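/- Under Assumptions (A) and (B), for every compact set K ⊂ [0,T) × ℝ^d and every bounded continuous function φ : ℝ^d → ℝ, sup_{(t,x) ∈ K} | ∫_{ℝ^d} φ(y) η_{λ,t,x}(y) dy − φ(x*) | → 0 as λ ↓ 0; that is, the conditional terminal laws η_{λ,t,x}(y) dy converge to δ_{x*} uniformly on compact subsets of [0,T) × ℝ^d. -/

import Mathlib

open MeasureTheory Real Filter Topology
open scoped RealInnerProductSpace

noncomputable section

/-- The heat kernel with diffusivity `β`: `G_r(z) = (4πβr)^(−d/2) exp(−‖z‖²/(4βr))`. -/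
def heatK {d : ℕ} (β r : ℝ) (z : EuclideanSpace ℝ (Fin d)) : ℝ :=
  (4 * π * β * r) ^ (-(d : ℝ) / 2) * Real.exp (-‖z‖ ^ 2 / (4 * β * r))

/-- The Laplacian of a scalar function on `ℝ^d`. -/
def lap {d : ℕ} (g : EuclideanSpace ℝ (Fin d) → ℝ) (x : EuclideanSpace ℝ (Fin d)) : ℝ :=
  ∑ i : Fin d,
    fderiv ℝ (fun z => fderiv ℝ g z (EuclideanSpace.single i 1)) x (EuclideanSpace.single i 1)

/-- The normalized Gibbs density `π_λ(y) = e^{−α_λ f(y)} / M_λ`, with `α_λ = T/(2λβ)`. -/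
def gibbsDen {d : ℕ} (T β lam : ℝ) (f : EuclideanSpace ℝ (Fin d) → ℝ)
    (y : EuclideanSpace ℝ (Fin d)) : ℝ :=
  Real.exp (-(T / (2 * lam * β)) * f y) / ∫ z, Real.exp (-(T / (2 * lam * β)) * f z)

/-- `h_λ(t,x) = ∫ G_{T−t}(x−y) π_λ(y) dy`. -/
def hHC {d : ℕ} (T β lam : ℝ) (f : EuclideanSpace ℝ (Fin d) → ℝ) (t : ℝ)
    (x : EuclideanSpace ℝ (Fin d)) : ℝ :=
  ∫ y, heatK β (T - t) (x - y) * gibbsDen T β lam f y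

/-- The conditional terminal density `η_{λ,t,x}(y) = G_{T−t}(x−y) π_λ(y) / h_λ(t,x)`. -/
def etaHC {d : ℕ} (T β lam : ℝ) (f : EuclideanSpace ℝ (Fin d) → ℝ) (t : ℝ)
    (x y : EuclideanSpace ℝ (Fin d)) : ℝ :=
  heatK β (T - t) (x - y) * gibbsDen T β lam f y / hHC T β lam f t x

/-- The barycenter `a_λ(t,x) = ∫ y η_{λ,t,x}(y) dy`. -/
def aHC {d : ℕ} (T β lam : ℝ) (f : EuclideanSpace ℝ (Fin d) → ℝ) (t : ℝ)
    (x : EuclideanSpace ℝ (Fin d)) : EuclideanSpace ℝ (Fin d) :=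
  ∫ y, etaHC T β lam f t x y • y

/-- The optimal drift `u*_λ(t,x) = 2β ∇_x log h_λ(t,x)`. -/
def uHC {d : ℕ} (T β lam : ℝ) (f : EuclideanSpace ℝ (Fin d) → ℝ) (t : ℝ)
    (x : EuclideanSpace ℝ (Fin d)) : EuclideanSpace ℝ (Fin d) :=
  (2 * β) • gradient (fun z => Real.log (hHC T β lam f t z)) x

/-- The potential `Φ_λ(t,x) = −2β log h_λ(t,x)`. -/
def PhiHC {d : ℕ} (T β lam : ℝ) (f : EuclideanSpace ℝ (Fin d) → ℝ) (t : ℝ)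
    (x : EuclideanSpace ℝ (Fin d)) : ℝ :=
  -(2 * β) * Real.log (hHC T β lam f t x)

/-- The value function `V_λ(t,x) = −(2λβ/T) log h_λ(t,x) − (2λβ/T) log M_λ`. -/
def VHC {d : ℕ} (T β lam : ℝ) (f : EuclideanSpace ℝ (Fin d) → ℝ) (t : ℝ)
    (x : EuclideanSpace ℝ (Fin d)) : ℝ :=
  -(2 * lam * β / T) * Real.log (hHC T β lam f t x)
    - (2 * lam * β / T) * Real.log (∫ z, Real.exp (-(T / (2 * lam * β)) * f z))

lemma heatK_pos {d : ℕ} {β r : ℝ} (hβ : 0 < β) (hr : 0 < r) (z : EuclideanSpace ℝ (Fin d)) :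
    0 < heatK β r z :=
  mul_pos (Real.rpow_pos_of_pos (by positivity) _) (Real.exp_pos _)

lemma heatK_le {d : ℕ} {β r δ : ℝ} (hβ : 0 < β) (hδ : 0 < δ) (hr : δ ≤ r)
    (z : EuclideanSpace ℝ (Fin d)) :
    heatK β r z ≤ (4 * π * β * δ) ^ (-(d : ℝ) / 2) := by
  unfold heatK
  have hr0 : 0 < r := lt_of_lt_of_le hδ hr
  have hexp : (-(d : ℝ) / 2) ≤ 0 := by rw [neg_div]; exact neg_nonpos.mpr (by positivity)
  have h1 : (4 * π * β * r) ^ (-(d : ℝ) / 2) ≤ (4 * π * β * δ) ^ (-(d : ℝ) / 2) :=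
    Real.rpow_le_rpow_of_nonpos (by positivity) (by gcongr) hexp
  have h2 : Real.exp (-‖z‖ ^ 2 / (4 * β * r)) ≤ 1 := by
    apply Real.exp_le_one_iff.mpr
    have : 0 < r := lt_of_lt_of_le hδ hr
    have : 0 ≤ ‖z‖ ^ 2 / (4 * β * r) := by positivity
    rw [neg_div]; linarith
  calc (4 * π * β * r) ^ (-(d : ℝ) / 2) * Real.exp (-‖z‖ ^ 2 / (4 * β * r))
      ≤ (4 * π * β * r) ^ (-(d : ℝ) / 2) * 1 := by
        exact mul_le_mul_of_nonneg_left h2 (Real.rpow_pos_of_pos (by positivity) _).le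
    _ ≤ (4 * π * β * δ) ^ (-(d : ℝ) / 2) := by rw [mul_one]; exact h1

lemma heatK_ge {d : ℕ} {β r δ T R : ℝ} (hβ : 0 < β) (hδ : 0 < δ) (hr1 : δ ≤ r) (hr2 : r ≤ T)
    {z : EuclideanSpace ℝ (Fin d)} (hz : ‖z‖ ≤ R) :
    (4 * π * β * T) ^ (-(d : ℝ) / 2) * Real.exp (-(R ^ 2) / (4 * β * δ)) ≤ heatK β r z := by
  unfold heatK
  have hr0 : 0 < r := lt_of_lt_of_le hδ hr1
  have hexp : (-(d : ℝ) / 2) ≤ 0 := by rw [neg_div]; exact neg_nonpos.mpr (by positivity)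
  have h1 : (4 * π * β * T) ^ (-(d : ℝ) / 2) ≤ (4 * π * β * r) ^ (-(d : ℝ) / 2) :=
    Real.rpow_le_rpow_of_nonpos (by positivity) (by gcongr) hexp
  have h2 : Real.exp (-(R ^ 2) / (4 * β * δ)) ≤ Real.exp (-‖z‖ ^ 2 / (4 * β * r)) := by
    apply Real.exp_le_exp.mpr
    rw [neg_div, neg_div, neg_le_neg_iff]
    exact div_le_div₀ (by positivity) (by nlinarith [norm_nonneg z]) (by positivity)
      (by nlinarith)
  exact mul_le_mul h1 h2 (Real.exp_pos _).le (Real.rpow_pos_of_pos (by positivity) _).le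

lemma heatK_cont {d : ℕ} (β r : ℝ) : Continuous (heatK (d := d) β r) := by
  unfold heatK
  exact continuous_const.mul (((continuous_norm.pow 2).neg.div_const _).rexp)

set_option maxHeartbeats 1000000 in
theorem conditional_low_temp (d : ℕ) (hd : 1 ≤ d) (T β : ℝ)
    (hT : 0 < T) (hβ : 0 < β)
    (f : EuclideanSpace ℝ (Fin d) → ℝ)
    (hf : ContDiff ℝ 2 f)
    (hbdd : BddBelow (Set.range f))
    (hcoer : Tendsto f (cocompact (EuclideanSpace ℝ (Fin d))) atTop)
    (hint : ∀ c > 0,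
      Integrable (fun y => Real.exp (-c * f y)) ∧
      Integrable (fun y => ‖gradient f y‖ * Real.exp (-c * f y)) ∧
      Integrable (fun y => ‖iteratedFDeriv ℝ 2 f y‖ * Real.exp (-c * f y)))
    (xstar : EuclideanSpace ℝ (Fin d))
    (hmin : ∀ y, f xstar ≤ f y)
    (huniq : ∀ y, f y = f xstar → y = xstar) :
    ∀ K : Set (ℝ × EuclideanSpace ℝ (Fin d)), IsCompact K →
      K ⊆ Set.Ico 0 T ×ˢ Set.univ →
      ∀ φ : EuclideanSpace ℝ (Fin d) → ℝ, Continuous φ → (∃ Cb, ∀ y, |φ y| ≤ Cb) →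
        TendstoUniformlyOn
          (fun lam (p : ℝ × EuclideanSpace ℝ (Fin d)) =>
            ∫ y, φ y * etaHC T β lam f p.1 p.2 y)
          (fun _ => φ xstar) (𝓝[>] 0) K := by
  intro K hK hKsub φ hφc hφb
  obtain ⟨Cb, hCb⟩ := hφb
  have hCb0 : 0 ≤ Cb := le_trans (abs_nonneg _) (hCb xstar)
  rcases K.eq_empty_or_nonempty with hKe | hKne
  · subst hKe
    rw [Metric.tendstoUniformlyOn_iff]
    intro ε hε
    filter_upwards with lam p hp
    exact absurd hp (Set.notMem_empty p)
  -- t bounds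
  have hfst : IsCompact (Prod.fst '' K) := hK.image continuous_fst
  have hfstne : (Prod.fst '' K).Nonempty := hKne.image _
  have htmem : sSup (Prod.fst '' K) ∈ Prod.fst '' K := hfst.sSup_mem hfstne
  set tmax := sSup (Prod.fst '' K) with htmaxdef
  have htmaxlt : tmax < T := by
    obtain ⟨p, hpK, hpt⟩ := htmem
    have h := hKsub hpK
    rw [Set.mem_prod, Set.mem_Ico] at h
    rw [← hpt]; exact h.1.2
  set δ := T - tmax with hδdef
  have hδ : 0 < δ := sub_pos.mpr htmaxlt
  have htK : ∀ p ∈ K, δ ≤ T - p.1 ∧ T - p.1 ≤ T := by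
    intro p hp
    have h := hKsub hp
    rw [Set.mem_prod, Set.mem_Ico] at h
    constructor
    · have : p.1 ≤ tmax := le_csSup hfst.bddAbove ⟨p, hp, rfl⟩
      simp only [hδdef]; linarith
    · linarith [h.1.1]
  -- x bounds
  obtain ⟨R, hR⟩ := (hK.image continuous_snd).isBounded.subset_closedBall 0
  have hxR : ∀ p ∈ K, ‖p.2‖ ≤ R := by
    intro p hp
    have := hR ⟨p, hp, rfl⟩
    simpa [Metric.mem_closedBall, dist_zero_right] using this
  -- kernel upper constant
  set Cmax := (4 * π * β * δ) ^ (-(d : ℝ) / 2) with hCmaxdef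
  have hCmax : 0 < Cmax := Real.rpow_pos_of_pos (by positivity) _
  rw [Metric.tendstoUniformlyOn_iff]
  intro ε hε
  -- continuity radius
  obtain ⟨ρ, hρ, hφρ⟩ : ∃ ρ > 0, ∀ y, dist y xstar < ρ → |φ y - φ xstar| ≤ ε / 2 := by
    obtain ⟨ρ, hρ, h⟩ := Metric.continuousAt_iff.mp hφc.continuousAt (ε / 2) (by linarith)
    exact ⟨ρ, hρ, fun y hy => le_of_lt (by simpa [Real.dist_eq] using h hy)⟩
  -- gap m
  obtain ⟨m, hm, hfm⟩ :
      ∃ m, 0 < m ∧ ∀ y, y ∉ Metric.ball xstar ρ → f xstar + m ≤ f y := by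
    have hev : ∀ᶠ y in cocompact (EuclideanSpace ℝ (Fin d)), f xstar + 1 ≤ f y :=
      hcoer.eventually (eventually_ge_atTop _)
    obtain ⟨C, hC, hCf⟩ := (hasBasis_cocompact.eventually_iff).mp hev
    by_cases hW : (C ∩ (Metric.ball xstar ρ)ᶜ).Nonempty
    · have hWc : IsCompact (C ∩ (Metric.ball xstar ρ)ᶜ) :=
        hC.inter_right Metric.isOpen_ball.isClosed_compl
      obtain ⟨y₀, hy₀W, hy₀min⟩ := hWc.exists_isMinOn hW hf.continuous.continuousOn
      have hy₀ : f xstar < f y₀ := by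
        rcases lt_or_eq_of_le (hmin y₀) with h | h
        · exact h
        · exact absurd (huniq y₀ h.symm)
            (fun he => hy₀W.2 (by simp [he, Metric.mem_ball, hρ]))
      refine ⟨min 1 (f y₀ - f xstar), lt_min one_pos (sub_pos.mpr hy₀), ?_⟩
      intro y hy
      by_cases hyC : y ∈ C
      · have h2 := hy₀min ⟨hyC, hy⟩
        have h3 : min 1 (f y₀ - f xstar) ≤ f y₀ - f xstar := min_le_right _ _
        have h4 : f y₀ ≤ f y := h2
        linarith
      · have := hCf hyC
        linarith [min_le_left 1 (f y₀ - f xstar)]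
    · refine ⟨1, one_pos, fun y hy => ?_⟩
      have hyC : y ∉ C := fun h => hW ⟨y, h, hy⟩
      exact hCf hyC
  set fs := f xstar with hfsdef
  -- the good set S near xstar
  set S := Metric.ball xstar ρ ∩ f ⁻¹' (Set.Iio (fs + m / 2)) with hSdef
  have hSopen : IsOpen S := Metric.isOpen_ball.inter (isOpen_Iio.preimage hf.continuous)
  have hSne : S.Nonempty :=
    ⟨xstar, Metric.mem_ball_self hρ, by simp only [Set.mem_preimage, Set.mem_Iio]; linarith⟩
  have hSvol_pos : 0 < volume S := hSopen.measure_pos volume hSne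
  have hSvol_fin : volume S < ⊤ :=
    lt_of_le_of_lt (measure_mono Set.inter_subset_left) measure_ball_lt_top
  set V := (volume S).toReal with hVdef
  have hV0 : 0 < V := ENNReal.toReal_pos hSvol_pos.ne' hSvol_fin.ne
  set R' := R + (‖xstar‖ + ρ) with hR'def
  set cmin := (4 * π * β * T) ^ (-(d : ℝ) / 2) * Real.exp (-(R' ^ 2) / (4 * β * δ)) with hcmindef
  have hcmin0 : 0 < cmin := mul_pos (Real.rpow_pos_of_pos (by positivity) _) (Real.exp_pos _)
  have hI0int : Integrable (fun y => Real.exp (-(1 : ℝ) * f y)) := (hint 1 one_pos).1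
  set I0 := ∫ y, Real.exp (-(1 : ℝ) * f y) with hI0def
  have hI0pos : 0 < I0 := by
    rw [hI0def, integral_pos_iff_support_of_nonneg (fun y => (Real.exp_pos _).le) hI0int]
    have hsupp : Function.support (fun y => Real.exp (-(1 : ℝ) * f y)) = Set.univ :=
      Set.eq_univ_of_forall fun y => (Real.exp_pos _).ne'
    rw [hsupp]
    exact isOpen_univ.measure_pos volume ⟨xstar, trivial⟩
  set C0 := 2 * Cb * Cmax * I0 / (cmin * V) with hC0def
  have hC0nn : 0 ≤ C0 := by positivity
  -- eventual facts in lam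
  have hαt : Tendsto (fun lam : ℝ => T / (2 * lam * β)) (𝓝[>] (0 : ℝ)) atTop := by
    have h1 : Tendsto (fun lam : ℝ => lam⁻¹) (𝓝[>] (0 : ℝ)) atTop := tendsto_inv_nhdsGT_zero
    have heq : (fun lam : ℝ => T / (2 * lam * β)) = fun lam => (T / (2 * β)) * lam⁻¹ := by
      funext lam
      have h2 : 2 * lam * β = (2 * β) * lam := by ring
      rw [h2, div_mul_eq_div_div, div_eq_mul_inv]
    rw [heq]
    exact h1.const_mul_atTop (by positivity)
  have hsmall : ∀ᶠ lam in 𝓝[>] (0 : ℝ),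
      C0 * Real.exp (fs + m - T / (2 * lam * β) * (m / 2)) < ε / 2 := by
    have h2 : Tendsto (fun lam : ℝ => C0 * Real.exp (fs + m - T / (2 * lam * β) * (m / 2)))
        (𝓝[>] (0 : ℝ)) (𝓝 (C0 * 0)) := by
      apply Tendsto.const_mul
      apply Real.tendsto_exp_atBot.comp
      have h3 : Tendsto (fun lam : ℝ => T / (2 * lam * β) * (m / 2)) (𝓝[>] (0 : ℝ)) atTop :=
        hαt.atTop_mul_const (by positivity)
      have h4 : Tendsto (fun lam : ℝ => -(T / (2 * lam * β) * (m / 2))) (𝓝[>] (0 : ℝ)) atBot :=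
        tendsto_neg_atTop_atBot.comp h3
      have h5 := tendsto_atBot_add_const_left (𝓝[>] (0 : ℝ)) (fs + m) h4
      simpa [sub_eq_add_neg] using h5
    rw [mul_zero] at h2
    exact h2.eventually_lt_const (by linarith)
  have hα1 : ∀ᶠ lam in 𝓝[>] (0 : ℝ), 1 ≤ T / (2 * lam * β) := hαt.eventually_ge_atTop 1
  filter_upwards [hsmall, hα1, self_mem_nhdsWithin] with lam hlamsmall hlam1 hlampos
  intro p hp
  obtain ⟨t, x⟩ := p
  have hlam0 : 0 < lam := hlampos
  set α := T / (2 * lam * β) with hαdef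
  have hα0 : 0 < α := by positivity
  have hα1' : 1 ≤ α := hlam1
  set r := T - t with hrdef
  obtain ⟨hrδ, hrT⟩ := htK (t, x) hp
  simp only at hrδ hrT
  have hr0 : 0 < r := lt_of_lt_of_le hδ hrδ
  have hxR' : ‖x‖ ≤ R := hxR (t, x) hp
  have hR0 : 0 ≤ R := le_trans (norm_nonneg _) hxR'
  -- basic objects
  have hEint : Integrable (fun y => Real.exp (-α * f y)) := (hint α hα0).1
  set M := ∫ z, Real.exp (-α * f z) with hMdef
  have hMpos : 0 < M := by
    rw [hMdef, integral_pos_iff_support_of_nonneg (fun y => (Real.exp_pos _).le) hEint]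
    have hsupp : Function.support (fun y => Real.exp (-α * f y)) = Set.univ :=
      Set.eq_univ_of_forall fun y => (Real.exp_pos _).ne'
    rw [hsupp]
    exact isOpen_univ.measure_pos volume ⟨xstar, trivial⟩
  have hheatpos : ∀ y : EuclideanSpace ℝ (Fin d), 0 < heatK β r (x - y) :=
    fun y => heatK_pos hβ hr0 _
  have hheatle : ∀ y : EuclideanSpace ℝ (Fin d), heatK β r (x - y) ≤ Cmax :=
    fun y => heatK_le hβ hδ hrδ _
  have hheatmeas : AEStronglyMeasurable (fun y : EuclideanSpace ℝ (Fin d) => heatK β r (x - y))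
      volume :=
    ((heatK_cont β r).comp (continuous_const.sub continuous_id)).aestronglyMeasurable
  have hGEint : Integrable (fun y => heatK β r (x - y) * Real.exp (-α * f y)) :=
    hEint.bdd_mul hheatmeas
      (c := Cmax) (ae_of_all _ fun y => by rw [Real.norm_eq_abs, abs_of_pos (hheatpos y)]; exact hheatle y)
  have hGEpos : ∀ y, 0 < heatK β r (x - y) * Real.exp (-α * f y) :=
    fun y => mul_pos (hheatpos y) (Real.exp_pos _)
  set N1 := ∫ y, heatK β r (x - y) * Real.exp (-α * f y) with hN1def
  have hN1pos : 0 < N1 := by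
    rw [hN1def, integral_pos_iff_support_of_nonneg (fun y => (hGEpos y).le) hGEint]
    have hsupp : Function.support (fun y => heatK β r (x - y) * Real.exp (-α * f y))
        = Set.univ := Set.eq_univ_of_forall fun y => (hGEpos y).ne'
    rw [hsupp]
    exact isOpen_univ.measure_pos volume ⟨xstar, trivial⟩
  have hφGEint : Integrable (fun y => φ y * (heatK β r (x - y) * Real.exp (-α * f y))) :=
    hGEint.bdd_mul hφc.aestronglyMeasurable (c := Cb) (ae_of_all _ fun y => by rw [Real.norm_eq_abs]; exact hCb y)
  -- representation of the integral
  have hrepr : (∫ y, φ y * etaHC T β lam f t x y)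
      = (∫ y, φ y * (heatK β r (x - y) * Real.exp (-α * f y))) / N1 := by
    have hh : hHC T β lam f t x = N1 / M := by
      unfold hHC gibbsDen
      simp only [← hαdef, ← hrdef, ← hMdef]
      simp_rw [← mul_div_assoc]
      rw [integral_div, ← hN1def]
    have hptw : ∀ y, φ y * etaHC T β lam f t x y
        = φ y * (heatK β r (x - y) * Real.exp (-α * f y)) / N1 := by
      intro y
      unfold etaHC gibbsDen
      rw [hh]
      simp only [← hαdef, ← hrdef, ← hMdef]
      field_simp
    simp_rw [hptw]
    rw [integral_div]
  -- numerator as integral of (φ xstar - φ y)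
  have hψGEint : Integrable (fun y => (φ xstar - φ y) * (heatK β r (x - y) * Real.exp (-α * f y))) := by
    have := (hGEint.const_mul (φ xstar)).sub hφGEint
    simpa [sub_mul, Pi.sub_def] using this
  have hnum : φ xstar - (∫ y, φ y * (heatK β r (x - y) * Real.exp (-α * f y))) / N1
      = (∫ y, (φ xstar - φ y) * (heatK β r (x - y) * Real.exp (-α * f y))) / N1 := by
    have h1 : ∫ y, (φ xstar - φ y) * (heatK β r (x - y) * Real.exp (-α * f y))
        = φ xstar * N1 - ∫ y, φ y * (heatK β r (x - y) * Real.exp (-α * f y)) := by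
      simp_rw [sub_mul]
      rw [integral_sub (hGEint.const_mul _) hφGEint, hN1def, integral_const_mul]
    rw [h1]
    field_simp
  -- the two set-integral bounds
  set U := Metric.ball xstar ρ with hUdef
  have hUmeas : MeasurableSet U := Metric.isOpen_ball.measurableSet
  have hsplit : (∫ y, (φ xstar - φ y) * (heatK β r (x - y) * Real.exp (-α * f y)))
      = (∫ y in U, (φ xstar - φ y) * (heatK β r (x - y) * Real.exp (-α * f y)))
        + ∫ y in Uᶜ, (φ xstar - φ y) * (heatK β r (x - y) * Real.exp (-α * f y)) :=
    (integral_add_compl hUmeas hψGEint).symm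
  -- bound on U
  have hboundU : |∫ y in U, (φ xstar - φ y) * (heatK β r (x - y) * Real.exp (-α * f y))|
      ≤ (ε / 2) * N1 := by
    have h1 : |∫ y in U, (φ xstar - φ y) * (heatK β r (x - y) * Real.exp (-α * f y))|
        ≤ ∫ y in U, |(φ xstar - φ y) * (heatK β r (x - y) * Real.exp (-α * f y))| := by
      simpa only [Real.norm_eq_abs] using
        norm_integral_le_integral_norm
          (μ := volume.restrict U)
          (f := fun y => (φ xstar - φ y) * (heatK β r (x - y) * Real.exp (-α * f y)))
    have h2 : ∫ y in U, |(φ xstar - φ y) * (heatK β r (x - y) * Real.exp (-α * f y))|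
        ≤ ∫ y in U, (ε / 2) * (heatK β r (x - y) * Real.exp (-α * f y)) := by
      apply setIntegral_mono_on (hψGEint.abs.integrableOn)
        ((hGEint.const_mul (ε / 2)).integrableOn) hUmeas
      intro y hy
      rw [abs_mul, abs_of_pos (hGEpos y)]
      apply mul_le_mul_of_nonneg_right _ (hGEpos y).le
      rw [abs_sub_comm]
      exact hφρ y (Metric.mem_ball.mp hy)
    have h3 : ∫ y in U, (ε / 2) * (heatK β r (x - y) * Real.exp (-α * f y))
        ≤ (ε / 2) * N1 := by
      rw [integral_const_mul]
      apply mul_le_mul_of_nonneg_left _ (by linarith : (0:ℝ) ≤ ε / 2)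
      rw [hN1def]
      exact setIntegral_le_integral hGEint (ae_of_all _ fun y => (hGEpos y).le)
    linarith
  -- bound on Uᶜ
  set Kc := 2 * Cb * Cmax * Real.exp (-(α - 1) * (fs + m)) with hKcdef
  have hKc0 : 0 ≤ Kc := by positivity
  have hboundUc : |∫ y in Uᶜ, (φ xstar - φ y) * (heatK β r (x - y) * Real.exp (-α * f y))|
      ≤ Kc * I0 := by
    have h1 : |∫ y in Uᶜ, (φ xstar - φ y) * (heatK β r (x - y) * Real.exp (-α * f y))|
        ≤ ∫ y in Uᶜ, |(φ xstar - φ y) * (heatK β r (x - y) * Real.exp (-α * f y))| := by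
      simpa only [Real.norm_eq_abs] using
        norm_integral_le_integral_norm
          (μ := volume.restrict Uᶜ)
          (f := fun y => (φ xstar - φ y) * (heatK β r (x - y) * Real.exp (-α * f y)))
    have h2 : ∫ y in Uᶜ, |(φ xstar - φ y) * (heatK β r (x - y) * Real.exp (-α * f y))|
        ≤ ∫ y in Uᶜ, Kc * Real.exp (-(1 : ℝ) * f y) := by
      apply setIntegral_mono_on (hψGEint.abs.integrableOn)
        ((hI0int.const_mul Kc).integrableOn) hUmeas.compl
      intro y hy
      have hfy : fs + m ≤ f y := hfm y hy
      have hexp : Real.exp (-α * f y)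
          ≤ Real.exp (-(α - 1) * (fs + m)) * Real.exp (-(1 : ℝ) * f y) := by
        rw [← Real.exp_add]
        apply Real.exp_le_exp.mpr
        have h6 : (α - 1) * (fs + m) ≤ (α - 1) * f y :=
          mul_le_mul_of_nonneg_left hfy (by linarith)
        linarith
      have hψ : |φ xstar - φ y| ≤ 2 * Cb := by
        calc |φ xstar - φ y| ≤ |φ xstar| + |φ y| := abs_sub _ _
          _ ≤ Cb + Cb := add_le_add (hCb _) (hCb _)
          _ = 2 * Cb := by ring
      rw [abs_mul, abs_of_pos (hGEpos y)]
      calc |φ xstar - φ y| * (heatK β r (x - y) * Real.exp (-α * f y))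
          ≤ (2 * Cb) * (Cmax * (Real.exp (-(α - 1) * (fs + m)) * Real.exp (-(1 : ℝ) * f y))) := by
            apply mul_le_mul hψ _ (hGEpos y).le (by positivity)
            exact mul_le_mul (hheatle y) hexp (Real.exp_pos _).le hCmax.le
        _ = Kc * Real.exp (-(1 : ℝ) * f y) := by rw [hKcdef]; ring
    have h3 : ∫ y in Uᶜ, Kc * Real.exp (-(1 : ℝ) * f y) ≤ Kc * I0 := by
      rw [integral_const_mul]
      apply mul_le_mul_of_nonneg_left _ hKc0
      rw [hI0def]
      exact setIntegral_le_integral hI0int (ae_of_all _ fun y => (Real.exp_pos _).le)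
    linarith
  -- lower bound on N1
  have hlower : cmin * Real.exp (-α * (fs + m / 2)) * V ≤ N1 := by
    have h1 : ∀ y ∈ S, cmin * Real.exp (-α * (fs + m / 2))
        ≤ heatK β r (x - y) * Real.exp (-α * f y) := by
      intro y hy
      obtain ⟨hyb, hyf⟩ := hy
      have hyf' : f y < fs + m / 2 := hyf
      have hnormxy : ‖x - y‖ ≤ R' := by
        have h5 : ‖y‖ ≤ ‖xstar‖ + ρ := by
          have := Metric.mem_ball.mp hyb
          rw [dist_eq_norm] at this
          calc ‖y‖ = ‖(y - xstar) + xstar‖ := by rw [sub_add_cancel]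
            _ ≤ ‖y - xstar‖ + ‖xstar‖ := norm_add_le _ _
            _ ≤ ‖xstar‖ + ρ := by linarith
        calc ‖x - y‖ ≤ ‖x‖ + ‖y‖ := norm_sub_le _ _
          _ ≤ R + (‖xstar‖ + ρ) := add_le_add hxR' h5
      have hheatge : cmin ≤ heatK β r (x - y) := by
        rw [hcmindef]
        exact heatK_ge hβ hδ hrδ hrT hnormxy
      have hexpge : Real.exp (-α * (fs + m / 2)) ≤ Real.exp (-α * f y) := by
        apply Real.exp_le_exp.mpr
        have h6 : α * f y ≤ α * (fs + m / 2) := mul_le_mul_of_nonneg_left hyf'.le hα0.le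
        linarith
      exact mul_le_mul hheatge hexpge (Real.exp_pos _).le
        (le_trans hcmin0.le hheatge)
    have h2 : cmin * Real.exp (-α * (fs + m / 2)) * V
        ≤ ∫ y in S, heatK β r (x - y) * Real.exp (-α * f y) := by
      rw [hVdef]
      have h := setIntegral_ge_of_const_le hSopen.measurableSet hSvol_fin.ne h1 hGEint.integrableOn
      rw [smul_eq_mul, mul_comm] at h
      exact h
    have h3 : (∫ y in S, heatK β r (x - y) * Real.exp (-α * f y)) ≤ N1 := by
      rw [hN1def]
      exact setIntegral_le_integral hGEint (ae_of_all _ fun y => (hGEpos y).le)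
    linarith
  -- assemble
  have habs : dist (φ xstar) (∫ y, φ y * etaHC T β lam f t x y)
      = |∫ y, (φ xstar - φ y) * (heatK β r (x - y) * Real.exp (-α * f y))| / N1 := by
    rw [Real.dist_eq, hrepr, hnum, abs_div, abs_of_pos hN1pos]
  rw [habs]
  have hnumabs : |∫ y, (φ xstar - φ y) * (heatK β r (x - y) * Real.exp (-α * f y))|
      ≤ (ε / 2) * N1 + Kc * I0 := by
    rw [hsplit]
    calc |(∫ y in U, (φ xstar - φ y) * (heatK β r (x - y) * Real.exp (-α * f y)))
          + ∫ y in Uᶜ, (φ xstar - φ y) * (heatK β r (x - y) * Real.exp (-α * f y))|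
        ≤ |∫ y in U, (φ xstar - φ y) * (heatK β r (x - y) * Real.exp (-α * f y))|
          + |∫ y in Uᶜ, (φ xstar - φ y) * (heatK β r (x - y) * Real.exp (-α * f y))| :=
          abs_add_le _ _
      _ ≤ (ε / 2) * N1 + Kc * I0 := add_le_add hboundU hboundUc
  have hsm : C0 * Real.exp (fs + m - α * (m / 2)) < ε / 2 := hlamsmall
  clear_value Kc N1 M U tmax δ Cmax fs S V R' cmin I0 C0 α r
  have hfinal : |∫ y, (φ xstar - φ y) * (heatK β r (x - y) * Real.exp (-α * f y))| / N1
      ≤ ε / 2 + C0 * Real.exp (fs + m - α * (m / 2)) := by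
    have hstep1 : |∫ y, (φ xstar - φ y) * (heatK β r (x - y) * Real.exp (-α * f y))| / N1
        ≤ ((ε / 2) * N1 + Kc * I0) / N1 := by gcongr
    have hstep2 : ((ε / 2) * N1 + Kc * I0) / N1 = ε / 2 + Kc * I0 / N1 := by
      rw [add_div, mul_div_cancel_right₀ _ hN1pos.ne']
    have hstep3 : Kc * I0 / N1 ≤ Kc * I0 / (cmin * Real.exp (-α * (fs + m / 2)) * V) := by
      exact div_le_div_of_nonneg_left (mul_nonneg hKc0 hI0pos.le)
        (mul_pos (mul_pos hcmin0 (Real.exp_pos _)) hV0) hlower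
    have hstep4 : Kc * I0 / (cmin * Real.exp (-α * (fs + m / 2)) * V)
        = C0 * Real.exp (fs + m - α * (m / 2)) := by
      have hexpdiv : Real.exp (-(α - 1) * (fs + m)) / Real.exp (-α * (fs + m / 2))
          = Real.exp (fs + m - α * (m / 2)) := by
        rw [← Real.exp_sub]; congr 1; ring
      rw [hKcdef, hC0def, ← hexpdiv]
      field_simp
    calc |∫ y, (φ xstar - φ y) * (heatK β r (x - y) * Real.exp (-α * f y))| / N1
        ≤ ((ε / 2) * N1 + Kc * I0) / N1 := hstep1
      _ = ε / 2 + Kc * I0 / N1 := hstep2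
      _ ≤ ε / 2 + Kc * I0 / (cmin * Real.exp (-α * (fs + m / 2)) * V) := by linarith
      _ = ε / 2 + C0 * Real.exp (fs + m - α * (m / 2)) := by rw [hstep4]
  calc |∫ y, (φ xstar - φ y) * (heatK β r (x - y) * Real.exp (-α * f y))| / N1
      ≤ ε / 2 + C0 * Real.exp (fs + m - α * (m / 2)) := hfinal
    _ < ε / 2 + ε / 2 := by linarith [hsm]
    _ = ε := by ring
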